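/- Let a, b and c be positive integers. The meander of type a|b|c (three top blocks of sizes a, b, c, one bottom block of size a+b+c) is Frobenius — that is, its meander graph is connected and acyclic — if and only if gcd(a+b, b+c) = 1. -/

import Mathlib

/-- The meander graph of type `a₁|a₂|⋯|a_ℓ` where `L = [a₁,…,a_ℓ]` is the list of top
block sizes, on vertex set `Fin (a₁ + ⋯ + a_ℓ)`, with top edges within each block and
bottom edges `j ↔ n - 1 - j` coming from the single bottom block of size `n = L.sum`. -/
def meander (L : List ℕ) : SimpleGraph (Fin L.sum) :=
  SimpleGraph.fromRel (fun u v =>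
    (∃ k : Fin L.length, ∃ i : ℕ, i < L.get k ∧
      (u : ℕ) = (L.take k.val).sum + i ∧
      (v : ℕ) = (L.take k.val).sum + (L.get k - 1 - i))
    ∨ ((u : ℕ) + (v : ℕ) = L.sum - 1))

/-- A connected component is a cycle component if every vertex in it has degree 2. -/
def SimpleGraph.IsCycleComponent {V : Type*} (G : SimpleGraph V)
    (c : G.ConnectedComponent) : Prop :=
  ∀ v : V, G.connectedComponentMk v = c → (G.neighborSet v).ncard = 2

/-- The number of connected components of `G` that are cycles. -/
noncomputable def numCycleComponents {V : Type*} (G : SimpleGraph V) : ℕ :=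
  Nat.card {c : G.ConnectedComponent // G.IsCycleComponent c}

/-- The number of connected components of `G` that are paths (i.e. not cycles). -/
noncomputable def numPathComponents {V : Type*} (G : SimpleGraph V) : ℕ :=
  Nat.card {c : G.ConnectedComponent // ¬ G.IsCycleComponent c}

/-- A meander is Frobenius if its graph is a single path, equivalently (as every vertex
has degree at most 2) connected and acyclic. -/
def IsFrobenius {V : Type*} (G : SimpleGraph V) : Prop :=
  G.Connected ∧ G.IsAcyclic

namespace MeanderFrobeniusAux

open SimpleGraph

/-! ### Generic graph lemmas -/

lemma cycle_two_neighbors {V : Type*} [DecidableEq V] {G : SimpleGraph V} {v : V}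
    {c : G.Walk v v} (hc : c.IsCycle) :
    ∃ w y, w ≠ y ∧ G.Adj v w ∧ G.Adj v y ∧ w ∈ c.support ∧ y ∈ c.support := by
  cases c with
  | nil => exact absurd hc Walk.IsCycle.not_of_nil
  | @cons _ w₁ _ h q =>
    have hnodup := hc.edges_nodup
    rw [Walk.edges_cons, List.nodup_cons] at hnodup
    cases hqr : q.reverse with
    | nil =>
      exfalso
      have h3 := hc.three_le_length
      rw [Walk.length_cons] at h3
      have hl : q.length = 0 := by
        have := congrArg Walk.length hqr
        rwa [Walk.length_reverse, Walk.length_nil] at this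
      omega
    | @cons _ y _ h' q' =>
      refine ⟨w₁, y, ?_, h, h', ?_, ?_⟩
      · intro hwy
        subst hwy
        apply hnodup.1
        have : s(v, w₁) ∈ q.reverse.edges := by rw [hqr, Walk.edges_cons]; simp
        rw [Walk.edges_reverse, List.mem_reverse] at this
        exact this
      · rw [Walk.support_cons]
        exact List.mem_cons_of_mem _ q.start_mem_support
      · have : y ∈ q.reverse.support := by
          rw [hqr, Walk.support_cons]
          exact List.mem_cons_of_mem _ q'.start_mem_support
        rw [Walk.support_reverse, List.mem_reverse] at this
        rw [Walk.support_cons]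
        exact List.mem_cons_of_mem _ this

set_option linter.unreachableTactic false in
set_option linter.unusedTactic false in
lemma acyclic_of_maxdeg_two {V : Type*} [DecidableEq V] {G : SimpleGraph V}
    (hpre : G.Preconnected)
    (hdeg : ∀ v : V, ∃ x y : V, ∀ z, G.Adj v z → z = x ∨ z = y)
    (v₀ x₀ : V) (h₀ : ∀ z, G.Adj v₀ z → z = x₀) : G.IsAcyclic := by
  intro v c hc
  have closed : ∀ z ∈ c.support, ∀ u, G.Adj z u → u ∈ c.support := by
    intro z hz u hzu
    obtain ⟨w, y, hwy, hw, hy, hws, hys⟩ := cycle_two_neighbors (hc.rotate hz)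
    have hrot := c.support_rotate _ hz
    have hmem : ∀ t, t ∈ (c.rotate _ hz).support → t ∈ c.support := by
      intro t ht
      rw [Walk.support_eq_cons, List.mem_cons] at ht
      rcases ht with rfl | ht
      · exact hz
      · exact List.mem_of_mem_tail (hrot.mem_iff.mp ht)
    obtain ⟨x, y', hxy⟩ := hdeg z
    rcases hxy w hw with rfl | rfl <;> rcases hxy y hy with h2 | h2 <;>
      rcases hxy u hzu with h3 | h3 <;> subst h3 <;>
      first
        | exact hmem _ hws
        | exact hmem _ hys
        | (exact absurd h2.symm hwy) | (exact absurd h2 hwy) | (exact absurd rfl hwy)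
        | (subst h2; exact hmem _ hys) | (subst h2; exact hmem _ hws)
  have mem_of_walk : ∀ u z, u ∈ c.support → (p : G.Walk u z) → z ∈ c.support := by
    intro u z hu p
    induction p with
    | nil => exact hu
    | cons h p ih => exact ih (closed _ hu _ h)
  have hv₀ : v₀ ∈ c.support := mem_of_walk v v₀ c.start_mem_support (hpre v v₀).some
  obtain ⟨w, y, hwy, hw, hy, _, _⟩ := cycle_two_neighbors (hc.rotate hv₀)
  exact hwy ((h₀ w hw).trans (h₀ y hy).symm)

lemma reach_of_eq {V : Type*} {G : SimpleGraph V} {u v : V} (h : u = v) :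
    G.Reachable u v := by subst h; exact SimpleGraph.Reachable.refl u

/-! ### Meander-specific lemmas -/

lemma sum3 (a b c : ℕ) : ([a,b,c] : List ℕ).sum = a+b+c := by simp; omega

lemma adj_iff {a b c : ℕ} (ha : 0 < a) (hb : 0 < b) (hc : 0 < c)
    (u v : Fin (([a,b,c] : List ℕ).sum)) :
    (meander [a,b,c]).Adj u v ↔ ((u:ℕ) ≠ v ∧
      ((u:ℕ)+v+1 = a+b+c ∨ (u:ℕ)+v+1 = a ∨
       (a ≤ (u:ℕ) ∧ a ≤ (v:ℕ) ∧ (u:ℕ)+v+1 = 2*a+b) ∨ (u:ℕ)+v+1 = 2*(a+b)+c)) := by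
  have hu' : (u:ℕ) < a+b+c := lt_of_lt_of_eq u.isLt (sum3 a b c)
  have hv' : (v:ℕ) < a+b+c := lt_of_lt_of_eq v.isLt (sum3 a b c)
  rw [meander, SimpleGraph.fromRel_adj]
  constructor
  · rintro ⟨hne, h | h⟩ <;>
    [skip; skip] <;>
    · have hne' : (u:ℕ) ≠ (v:ℕ) := fun h => hne (Fin.val_injective h)
      refine ⟨hne', ?_⟩
      rcases h with ⟨k, i, hi, h1, h2⟩ | hsum
      · fin_cases k <;> simp at hi h1 h2 <;> omega
      · simp at hsum; omega
  · rintro ⟨hne, h⟩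
    refine ⟨fun hv => hne (congrArg Fin.val hv), Or.inl ?_⟩
    rcases h with h | h | ⟨h1, h2, h3⟩ | h
    · exact Or.inr (by simp; omega)
    · exact Or.inl ⟨⟨0, by simp⟩, (u:ℕ), by simp; omega⟩
    · exact Or.inl ⟨⟨1, by simp⟩, (u:ℕ) - a, by simp; omega⟩
    · exact Or.inl ⟨⟨2, by simp⟩, (u:ℕ) - (a+b), by simp; omega⟩

def vtx {a b c : ℕ} (x : ℕ) (h : x < a+b+c) : Fin (([a,b,c] : List ℕ).sum) :=
  ⟨x, lt_of_lt_of_eq h (sum3 a b c).symm⟩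

@[simp] lemma vtx_val {a b c : ℕ} (x : ℕ) (h : x < a+b+c) :
    ((vtx x h : Fin (([a,b,c] : List ℕ).sum)) : ℕ) = x := rfl

section
variable {a b c : ℕ} (ha : 0 < a) (hb : 0 < b) (hc : 0 < c)

include ha hb hc in
lemma sigma_reach (x y : ℕ) (hx : x < a+b+c) (hy : y < a+b+c)
    (h : (x < c ∧ y = x + (a+b)) ∨ (c ≤ x ∧ x < b+c ∧ y + (b+c) = x + (a+b)) ∨
         (b+c ≤ x ∧ y + (b+c) = x)) :
    (meander [a,b,c]).Reachable (vtx x hx) (vtx y hy) := by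
  have hz : a+b+c-1-x < a+b+c := by omega
  have r1 : (meander [a,b,c]).Reachable (vtx x hx) (vtx (a+b+c-1-x) hz) := by
    by_cases hxz : x = a+b+c-1-x
    · exact reach_of_eq (Fin.ext (by simpa using hxz))
    · exact ((adj_iff ha hb hc _ _).mpr ⟨by simpa using hxz, Or.inl (by simp; omega)⟩).reachable
  have r2 : (meander [a,b,c]).Reachable (vtx (a+b+c-1-x) hz) (vtx y hy) := by
    by_cases hzy : a+b+c-1-x = y
    · exact reach_of_eq (Fin.ext (by simpa using hzy))
    · refine ((adj_iff ha hb hc _ _).mpr ⟨by simpa using hzy, ?_⟩).reachable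
      rcases h with ⟨h1, h2⟩ | ⟨h1, h2, h3⟩ | ⟨h1, h2⟩
      · exact Or.inr (Or.inr (Or.inr (by simp; omega)))
      · exact Or.inr (Or.inr (Or.inl (by simp; omega)))
      · exact Or.inr (Or.inl (by simp; omega))
  exact r1.trans r2

include ha hb hc in
lemma reach_rot : ∀ t : ℕ, ∀ v : Fin (([a,b,c] : List ℕ).sum),
    (v:ℕ) = (t*(a+b)) % (a+2*b+c) →
    (meander [a,b,c]).Reachable (vtx 0 (by omega)) v := by
  have hNr : 0 < a+2*b+c := by omega
  have succ_mod : ∀ s : ℕ,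
      ((s+1)*(a+b)) % (a+2*b+c) = ((s*(a+b))%(a+2*b+c) + (a+b)) % (a+2*b+c) := by
    intro s
    have h1 : (s*(a+b)) % (a+2*b+c) ≡ s*(a+b) [MOD (a+2*b+c)] := Nat.mod_modEq _ _
    have h2 := h1.add_right (a+b)
    have h3 : (s+1)*(a+b) = s*(a+b) + (a+b) := by ring
    rw [h3]
    exact h2.symm
  intro t
  induction t using Nat.strong_induction_on with
  | _ t ih =>
    intro v hv
    have hvlt : (v:ℕ) < a+b+c := lt_of_lt_of_eq v.isLt (sum3 a b c)
    match t with
    | 0 =>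
      have h0 : (v:ℕ) = 0 := by simpa using hv
      exact reach_of_eq (Fin.ext (by simpa using h0.symm))
    | (s+1) =>
      set x := (s*(a+b)) % (a+2*b+c) with hxdef
      have hxlt : x < a+2*b+c := Nat.mod_lt _ hNr
      have hv2 : (v:ℕ) = (x + (a+b)) % (a+2*b+c) := by rw [hv, succ_mod s]
      by_cases hxn : x < a+b+c
      · have hr := ih s (by omega) (vtx x hxn) rfl
        refine hr.trans (sigma_reach ha hb hc x (v:ℕ) hxn hvlt ?_)
        by_cases h1 : x < c
        · left
          refine ⟨h1, ?_⟩
          rw [hv2, Nat.mod_eq_of_lt (by omega)]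
        · by_cases h2 : x < b+c
          · exfalso
            rw [Nat.mod_eq_of_lt (by omega)] at hv2
            omega
          · right; right
            refine ⟨by omega, ?_⟩
            rw [Nat.mod_eq_sub_mod (by omega), Nat.mod_eq_of_lt (by omega)] at hv2
            omega
      · have hs1 : s ≠ 0 := by
          intro h; rw [h] at hxdef; simp [hxdef] at hxn; omega
        obtain ⟨r, rfl⟩ : ∃ r, s = r + 1 := ⟨s - 1, by omega⟩
        set w := (r*(a+b)) % (a+2*b+c) with hwdef
        have hwlt : w < a+2*b+c := Nat.mod_lt _ hNr
        have hx2 : x = (w + (a+b)) % (a+2*b+c) := by rw [hxdef, succ_mod r]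
        have hw2 : c ≤ w ∧ w < b+c ∧ x = w + (a+b) := by
          by_cases h1 : w + (a+b) < a+2*b+c
          · rw [Nat.mod_eq_of_lt h1] at hx2
            exact ⟨by omega, by omega, hx2⟩
          · exfalso
            rw [Nat.mod_eq_sub_mod (by omega), Nat.mod_eq_of_lt (by omega)] at hx2
            omega
        obtain ⟨hwc, hwk, hxw⟩ := hw2
        have hwn : w < a+b+c := by omega
        have hr := ih r (by omega) (vtx w hwn) rfl
        refine hr.trans (sigma_reach ha hb hc w (v:ℕ) hwn hvlt ?_)
        right; left
        refine ⟨hwc, hwk, ?_⟩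
        rw [hxw, Nat.mod_eq_sub_mod (by omega), Nat.mod_eq_of_lt (by omega)] at hv2
        omega

include ha hb hc in
lemma meander_connected (hg : Nat.gcd (a+b) (b+c) = 1) : (meander [a,b,c]).Connected := by
  haveI : NeZero (a+2*b+c) := ⟨by omega⟩
  have hcop : Nat.Coprime (a+b) (a+2*b+c) := by
    have h1 : Nat.Coprime (a+b) ((b+c) + (a+b)*1) :=
      (Nat.coprime_add_mul_left_right (a+b) (b+c) 1).mpr hg
    have h2 : (b+c) + (a+b)*1 = a+2*b+c := by ring
    rwa [h2] at h1
  have reach : ∀ v : Fin (([a,b,c] : List ℕ).sum),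
      (meander [a,b,c]).Reachable (vtx 0 (by omega)) v := by
    intro v
    have hvlt : (v:ℕ) < a+b+c := lt_of_lt_of_eq v.isLt (sum3 a b c)
    obtain ⟨t, ht⟩ : ∃ t : ℕ, (t*(a+b)) % (a+2*b+c) = (v:ℕ) := by
      have hunit : IsUnit ((a+b : ℕ) : ZMod (a+2*b+c)) :=
        (ZMod.isUnit_iff_coprime _ _).mpr hcop
      obtain ⟨u, hu⟩ := hunit
      refine ⟨(((v:ℕ) : ZMod (a+2*b+c)) * ↑u⁻¹).val, ?_⟩
      have : ((((((v:ℕ) : ZMod (a+2*b+c)) * ↑u⁻¹).val * (a+b) : ℕ)) : ZMod (a+2*b+c))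
          = (((v:ℕ) : ℕ) : ZMod (a+2*b+c)) := by
        rw [Nat.cast_mul, ZMod.natCast_val, ZMod.cast_id, ← hu, mul_assoc,
          Units.inv_mul, mul_one]
      rw [ZMod.natCast_eq_natCast_iff'] at this
      rw [this]
      exact Nat.mod_eq_of_lt (by omega)
    exact reach_rot ha hb hc t v ht.symm
  rw [SimpleGraph.connected_iff]
  exact ⟨fun u v => (reach u).symm.trans (reach v), ⟨vtx 0 (by omega)⟩⟩

include ha hb hc in
lemma two_nbrs (v : Fin (([a,b,c] : List ℕ).sum)) :
    ∃ x y, ∀ z, (meander [a,b,c]).Adj v z → z = x ∨ z = y := by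
  have hvlt : (v:ℕ) < a+b+c := lt_of_lt_of_eq v.isLt (sum3 a b c)
  by_cases h1 : (v:ℕ) < a
  · refine ⟨vtx (a+b+c-1-v) (by omega), vtx (a-1-v) (by omega), fun z hz => ?_⟩
    rw [adj_iff ha hb hc] at hz
    have hzlt : (z:ℕ) < a+b+c := lt_of_lt_of_eq z.isLt (sum3 a b c)
    obtain ⟨hne, h | h | ⟨h2, h3, h4⟩ | h⟩ := hz
    · exact Or.inl (Fin.ext (by simp; omega))
    · exact Or.inr (Fin.ext (by simp; omega))
    · omega
    · omega
  · by_cases h2 : (v:ℕ) < a+b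
    · refine ⟨vtx (a+b+c-1-v) (by omega), vtx (2*a+b-1-v) (by omega), fun z hz => ?_⟩
      rw [adj_iff ha hb hc] at hz
      have hzlt : (z:ℕ) < a+b+c := lt_of_lt_of_eq z.isLt (sum3 a b c)
      obtain ⟨hne, h | h | ⟨h3, h4, h5⟩ | h⟩ := hz
      · exact Or.inl (Fin.ext (by simp; omega))
      · omega
      · exact Or.inr (Fin.ext (by simp; omega))
      · omega
    · refine ⟨vtx (a+b+c-1-v) (by omega), vtx (2*(a+b)+c-1-v) (by omega), fun z hz => ?_⟩
      rw [adj_iff ha hb hc] at hz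
      have hzlt : (z:ℕ) < a+b+c := lt_of_lt_of_eq z.isLt (sum3 a b c)
      obtain ⟨hne, h | h | ⟨h3, h4, h5⟩ | h⟩ := hz
      · exact Or.inl (Fin.ext (by simp; omega))
      · omega
      · omega
      · exact Or.inr (Fin.ext (by simp; omega))

include ha hb hc in
lemma one_nbr (hodd : ¬ (2 ∣ a ∧ 2 ∣ b ∧ 2 ∣ c)) :
    ∃ (v₀ x₀ : Fin (([a,b,c] : List ℕ).sum)),
      ∀ z, (meander [a,b,c]).Adj v₀ z → z = x₀ := by
  have key : ∀ (w : ℕ) (hw : w < a+b+c),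
      (2*w+1 = a ∨ (a ≤ w ∧ 2*w+1 = 2*a+b) ∨ (a+b ≤ w ∧ 2*w+1 = 2*(a+b)+c)) →
      ∀ z, (meander [a,b,c]).Adj (vtx w hw) z → z = vtx (a+b+c-1-w) (by omega) := by
    intro w hw hmid z hz
    rw [adj_iff ha hb hc] at hz
    simp only [vtx_val] at hz
    have hzlt : (z:ℕ) < a+b+c := lt_of_lt_of_eq z.isLt (sum3 a b c)
    refine Fin.ext ?_
    simp only [vtx_val]
    obtain ⟨hne, h | h | ⟨h3, h4, h5⟩ | h⟩ := hz <;> omega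
  rcases Nat.even_or_odd a with hpa | hpa
  · rcases Nat.even_or_odd b with hpb | hpb
    · rcases Nat.even_or_odd c with hpc | hpc
      · exact absurd ⟨hpa.two_dvd, hpb.two_dvd, hpc.two_dvd⟩ hodd
      · obtain ⟨j, hj⟩ := hpc
        exact ⟨vtx (a+b+j) (by omega), _, key (a+b+j) (by omega) (by omega)⟩
    · obtain ⟨j, hj⟩ := hpb
      exact ⟨vtx (a+j) (by omega), _, key (a+j) (by omega) (by omega)⟩
  · obtain ⟨j, hj⟩ := hpa
    exact ⟨vtx j (by omega), _, key j (by omega) (by omega)⟩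

include ha hb hc in
lemma adj_invariant {g : ℕ} (hga : g ∣ a+b) (hgk : g ∣ b+c)
    {u v : Fin (([a,b,c] : List ℕ).sum)} (h : (meander [a,b,c]).Adj u v) :
    (u:ℕ) + (v:ℕ) ≡ a+b+c-1 [MOD g] := by
  rw [adj_iff ha hb hc] at h
  have hu : (u:ℕ) < a+b+c := lt_of_lt_of_eq u.isLt (sum3 a b c)
  have hv : (v:ℕ) < a+b+c := lt_of_lt_of_eq v.isLt (sum3 a b c)
  obtain ⟨hne, h | h | ⟨h1, h2, h3⟩ | h⟩ := h
  · have : (u:ℕ) + (v:ℕ) = a+b+c-1 := by omega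
    rw [this]
  · refine (Nat.modEq_iff_dvd' (by omega)).mpr ?_
    have : a+b+c-1 - ((u:ℕ)+(v:ℕ)) = b+c := by omega
    rw [this]; exact hgk
  · have e1 : (u:ℕ)+(v:ℕ) ≡ (u:ℕ)+(v:ℕ) + (b+c) [MOD g] :=
      (Nat.modEq_iff_dvd' (by omega)).mpr (by simpa using hgk)
    have e2 : (u:ℕ)+(v:ℕ) + (b+c) = (a+b+c-1) + (a+b) := by omega
    have e3 : (a+b+c-1) + (a+b) ≡ a+b+c-1 [MOD g] :=
      ((Nat.modEq_iff_dvd' (by omega)).mpr (by simpa using hga)).symm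
    exact e1.trans (e2 ▸ e3)
  · exact ((Nat.modEq_iff_dvd' (by omega)).mpr (by
      have : (u:ℕ)+(v:ℕ) - (a+b+c-1) = a+b := by omega
      rw [this]; exact hga)).symm

include ha hb hc in
lemma reach_invariant {g : ℕ} (hga : g ∣ a+b) (hgk : g ∣ b+c)
    {u v : Fin (([a,b,c] : List ℕ).sum)} (h : (meander [a,b,c]).Reachable u v)
    (h0 : (u:ℕ) % g = 0 ∨ (u:ℕ) % g = (a+b+c-1) % g) :
    (v:ℕ) % g = 0 ∨ (v:ℕ) % g = (a+b+c-1) % g := by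
  obtain ⟨p⟩ := h
  induction p with
  | nil => exact h0
  | @cons x y z hxy p ih =>
    apply ih
    have hstep := adj_invariant ha hb hc hga hgk hxy
    rcases h0 with h0 | h0
    · right
      have hx : (x:ℕ) ≡ 0 [MOD g] := by rwa [Nat.ModEq, Nat.zero_mod]
      have := (hx.add_right (y:ℕ)).symm.trans hstep
      simpa [Nat.ModEq] using this
    · left
      have hx : (x:ℕ) ≡ a+b+c-1 [MOD g] := h0
      have h1 : (x:ℕ) + (y:ℕ) ≡ (a+b+c-1) + 0 [MOD g] := by simpa using hstep
      have h2 : (x:ℕ) + (y:ℕ) ≡ (a+b+c-1) + (y:ℕ) [MOD g] := hx.add_right _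
      have h3 := Nat.ModEq.add_left_cancel' (a+b+c-1) (h2.symm.trans h1)
      simpa [Nat.ModEq] using h3

end

end MeanderFrobeniusAux

set_option maxHeartbeats 1000000 in
open MeanderFrobeniusAux in
/-- Coll–Gerstenhaber–Magnant: the meander of type `a|b|c` is Frobenius
if and only if `gcd(a + b, b + c) = 1`. -/
theorem meander_three_blocks_frobenius_iff (a b c : ℕ)
    (ha : 0 < a) (hb : 0 < b) (hc : 0 < c) :
    IsFrobenius (meander [a, b, c]) ↔ Nat.gcd (a + b) (b + c) = 1 := by
  constructor
  · intro hF
    by_contra hg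
    set g := Nat.gcd (a+b) (b+c) with hgdef
    have hga : g ∣ a+b := Nat.gcd_dvd_left _ _
    have hgk : g ∣ b+c := Nat.gcd_dvd_right _ _
    have hg0 : g ≠ 0 := by
      intro h
      have := Nat.eq_zero_of_gcd_eq_zero_left (hgdef ▸ h)
      omega
    have hg2 : 2 ≤ g := by omega
    by_cases hg3 : 3 ≤ g ∨ (a+b+c) % 2 = 1
    · -- disconnected case
      have final : ∀ r : ℕ, r ≠ 0 → r ≠ (a+b+c-1) % g → r < g → False := by
        intro r hr0 hrs hrg
        have hgab : g ≤ a+b := Nat.le_of_dvd (by omega) hga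
        have hrn : r < a+b+c := by omega
        have hinv := reach_invariant ha hb hc hga hgk
          (hF.1.preconnected (vtx 0 (by omega)) (vtx r hrn)) (Or.inl (by simp))
        rw [vtx_val, Nat.mod_eq_of_lt hrg] at hinv
        rcases hinv with h | h <;> omega
      have hkey : (a+b+c-1) % g = 1 → 3 ≤ g := by
        intro h1
        by_contra h3
        have hgg2 : g = 2 := by omega
        rw [hgg2] at h1
        rcases hg3 with h | h
        · omega
        · omega
      by_cases h1 : (a+b+c-1) % g = 1
      · exact final 2 (by omega) (by omega) (hkey h1)
      · exact final 1 (by omega) (by omega) (by omega)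
    · -- all even case: every vertex has degree ≥ 2, contradicting tree edge count
      push_neg at hg3
      obtain ⟨hglt, hneven⟩ := hg3
      have hgg2 : g = 2 := by omega
      have h2ab : 2 ∣ a+b := hgg2 ▸ hga
      have h2bc : 2 ∣ b+c := hgg2 ▸ hgk
      have h2a : 2 ∣ a := by omega
      have h2b : 2 ∣ b := by omega
      have h2c : 2 ∣ c := by omega
      have hac : a ≠ c := by
        intro h
        have hgeq : g = b+c := by
          rw [hgdef, h, Nat.add_comm c b, Nat.gcd_self]
        omega
      classical
      letI : DecidableRel (meander [a,b,c]).Adj := Classical.decRel _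
      have hdeg2 : ∀ v : Fin (([a,b,c] : List ℕ).sum), 2 ≤ (meander [a,b,c]).degree v := by
        intro v
        have hvlt : (v:ℕ) < a+b+c := lt_of_lt_of_eq v.isLt (sum3 a b c)
        rw [← SimpleGraph.card_neighborFinset_eq_degree]
        refine Finset.one_lt_card.mpr ?_
        by_cases hb1 : (v:ℕ) < a
        · refine ⟨vtx (a+b+c-1-v) (by omega), ?_, vtx (a-1-v) (by omega), ?_, ?_⟩
          · rw [SimpleGraph.mem_neighborFinset, adj_iff ha hb hc]
            exact ⟨by simp; omega, Or.inl (by simp; omega)⟩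
          · rw [SimpleGraph.mem_neighborFinset, adj_iff ha hb hc]
            exact ⟨by simp; omega, Or.inr (Or.inl (by simp; omega))⟩
          · intro h
            have := congrArg Fin.val h
            simp at this
            omega
        · by_cases hb2 : (v:ℕ) < a+b
          · refine ⟨vtx (a+b+c-1-v) (by omega), ?_, vtx (2*a+b-1-v) (by omega), ?_, ?_⟩
            · rw [SimpleGraph.mem_neighborFinset, adj_iff ha hb hc]
              exact ⟨by simp; omega, Or.inl (by simp; omega)⟩
            · rw [SimpleGraph.mem_neighborFinset, adj_iff ha hb hc]
              exact ⟨by simp; omega, Or.inr (Or.inr (Or.inl (by simp; omega)))⟩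
            · intro h
              have := congrArg Fin.val h
              simp at this
              omega
          · refine ⟨vtx (a+b+c-1-v) (by omega), ?_, vtx (2*(a+b)+c-1-v) (by omega), ?_, ?_⟩
            · rw [SimpleGraph.mem_neighborFinset, adj_iff ha hb hc]
              exact ⟨by simp; omega, Or.inl (by simp; omega)⟩
            · rw [SimpleGraph.mem_neighborFinset, adj_iff ha hb hc]
              exact ⟨by simp; omega, Or.inr (Or.inr (Or.inr (by simp; omega)))⟩
            · intro h
              have := congrArg Fin.val h
              simp at this
              omega
      have htree : (meander [a,b,c]).IsTree := ⟨hF.1, hF.2⟩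
      have hcard := htree.card_edgeFinset
      have hhs := SimpleGraph.sum_degrees_eq_twice_card_edges (meander [a,b,c])
      have hsum : 2 * Fintype.card (Fin (([a,b,c] : List ℕ).sum))
          ≤ ∑ v, (meander [a,b,c]).degree v := by
        calc 2 * Fintype.card (Fin (([a,b,c] : List ℕ).sum))
            = ∑ _v : Fin (([a,b,c] : List ℕ).sum), 2 := by
              rw [Finset.sum_const, Finset.card_univ, smul_eq_mul, Nat.mul_comm]
          _ ≤ ∑ v, (meander [a,b,c]).degree v := Finset.sum_le_sum fun i _ => hdeg2 i
      rw [hhs] at hsum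
      have hNcard : Fintype.card (Fin (([a,b,c] : List ℕ).sum)) = a+b+c := by
        rw [Fintype.card_fin, sum3]
      omega
  · intro hg
    have hcon := meander_connected ha hb hc hg
    have hnodd : ¬(2 ∣ a ∧ 2 ∣ b ∧ 2 ∣ c) := by
      rintro ⟨h1, h2, h3⟩
      have : (2:ℕ) ∣ Nat.gcd (a+b) (b+c) := Nat.dvd_gcd (by omega) (by omega)
      omega
    obtain ⟨v₀, x₀, h₀⟩ := one_nbr ha hb hc hnodd
    exact ⟨hcon, acyclic_of_maxdeg_two hcon.preconnected (two_nbrs ha hb hc) v₀ x₀ h₀⟩
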